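/- Let q, t, r, s, x, y_1, …, y_n be nonzero complex numbers with |q| < 1, s = t·r, and r·s = q. Define F(x) = ∏_{k=1}^{n} (s x y_k; q)_∞ (s x y_k^{-1}; q)_∞ / ((r x y_k; q)_∞ (r x y_k^{-1}; q)_∞), assuming no factor in a denominator vanishes. Then t^n · F(qx) · ∏_{k=1}^{n} e(s x; y_k) = F(x) · ∏_{k=1}^{n} e(r x; y_k), where e(z;w) = z + z^{-1} − w − w^{-1} and (a;q)_∞ = ∏_{i=0}^{∞}(1 − a q^i). -/

import Mathlib

/-- The BC-type building block `e(z;w) = z + z⁻¹ - w - w⁻¹`. -/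
noncomputable def eBC (z w : ℂ) : ℂ := z + z⁻¹ - w - w⁻¹

/-- The infinite `q`-Pochhammer product `(a;q)_∞ = ∏_{i=0}^{∞} (1 - a q^i)`. -/
noncomputable def qpochInf (a q : ℂ) : ℂ := ∏' i : ℕ, (1 - a * q ^ i)

open Filter Complex

lemma multipliable_qpoch (a q : ℂ) (hq : ‖q‖ < 1) :
    Multipliable (fun i : ℕ => 1 - a * q ^ i) := by
  by_cases h : ∃ i, 1 - a * q ^ i = 0
  · obtain ⟨i₀, hi₀⟩ := h
    refine ⟨0, ?_⟩
    have hev : ∀ᶠ s : Finset ℕ in atTop, ∏ i ∈ s, (1 - a * q ^ i) = (0 : ℂ) := by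
      filter_upwards [Filter.eventually_ge_atTop {i₀}] with s hs
      exact Finset.prod_eq_zero (hs (Finset.mem_singleton_self i₀)) hi₀
    exact Filter.Tendsto.congr' (hev.mono fun s hs => hs.symm) tendsto_const_nhds
  · push_neg at h
    refine Complex.multipliable_of_summable_log ?_
    have hgeo : Summable (fun n : ℕ => (3/2 : ℝ) * (‖a‖ * ‖q‖ ^ n)) := by
      exact ((summable_geometric_of_lt_one (by positivity) hq).mul_left
        (‖a‖)).mul_left _
    refine Summable.of_norm_bounded_eventually_nat hgeo ?_
    have h0 : Tendsto (fun n : ℕ => ‖a‖ * ‖q‖ ^ n) atTop (nhds 0) := by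
      simpa using (tendsto_pow_atTop_nhds_zero_of_lt_one (norm_nonneg q) hq).const_mul
        (‖a‖)
    filter_upwards [h0.eventually (ge_mem_nhds (by norm_num : (0:ℝ) < 1/2))] with n hn
    have hz : ‖-(a * q ^ n)‖ ≤ 1/2 := by
      rw [norm_neg]
      calc ‖a * q ^ n‖ = ‖a‖ * ‖q‖ ^ n := by
            simp [map_mul, map_pow]
        _ ≤ 1/2 := by exact_mod_cast le_trans hn (by norm_num)
    have := Complex.norm_log_one_add_half_le_self hz
    have harg : (1 : ℂ) + -(a * q ^ n) = 1 - a * q ^ n := by ring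
    rw [harg] at this
    calc ‖Complex.log (1 - a * q ^ n)‖ ≤ 3/2 * ‖-(a * q ^ n)‖ := this
      _ = 3/2 * (‖a‖ * ‖q‖ ^ n) := by
          simp [map_mul, map_pow]

set_option maxHeartbeats 800000 in
lemma qpoch_shift (a q : ℂ) (hq : ‖q‖ < 1) :
    qpochInf a q = (1 - a) * qpochInf (a * q) q := by
  have hm : Multipliable (fun n : ℕ => 1 - a * q ^ (n + 1)) := by
    have := multipliable_qpoch (a * q) q hq
    refine this.congr fun n => ?_
    ring
  rw [qpochInf, tprod_eq_zero_mul' hm]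
  simp only [pow_zero, mul_one, qpochInf]
  congr 1
  exact tprod_congr fun n => by ring

lemma eBC_factor (c w : ℂ) (hc : c ≠ 0) (hw : w ≠ 0) :
    eBC c w = (1 - c * w) * (1 - c * w⁻¹) / c := by
  unfold eBC
  field_simp
  ring

lemma aux_alg (t r x P1 P2 Q1 Q2 u1 u2 v1 v2 : ℂ) (ht : t ≠ 0) (hr : r ≠ 0) (hx : x ≠ 0)
    (hv1 : v1 ≠ 0) (hv2 : v2 ≠ 0) :
    t * (P1 * P2 / (Q1 * Q2)) * (u1 * u2 / (t * r * x)) =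
      u1 * P1 * (u2 * P2) / (v1 * Q1 * (v2 * Q2)) * (v1 * v2 / (r * x)) := by
  by_cases hQ : Q1 * Q2 = 0
  · have h2 : v1 * Q1 * (v2 * Q2) = 0 := by
      rw [show v1 * Q1 * (v2 * Q2) = v1 * v2 * (Q1 * Q2) by ring, hQ, mul_zero]
    rw [hQ, h2, div_zero, div_zero]
    ring
  · have hQ1 : Q1 ≠ 0 := fun h => hQ (by rw [h, zero_mul])
    have hQ2 : Q2 ≠ 0 := fun h => hQ (by rw [h, mul_zero])
    field_simp

/-- The `q`-difference equation characterizing the Cauchy-type kernel function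
in a single `x`-variable: with `s = t r` and `r s = q`,
`t^n · F(qx) · ∏_k e(sx; y_k) = F(x) · ∏_k e(rx; y_k)`. -/
theorem kernel_qdifference_equation (n : ℕ) (q t r s x : ℂ) (y : Fin n → ℂ)
    (hq0 : q ≠ 0) (ht : t ≠ 0) (hr : r ≠ 0) (hs : s ≠ 0) (hx : x ≠ 0)
    (hy : ∀ k, y k ≠ 0) (hqlt : ‖q‖ < 1)
    (hst : s = t * r) (hrs : r * s = q)
    (hden : ∀ (k : Fin n) (i : ℕ),
      1 - r * x * y k * q ^ i ≠ 0 ∧ 1 - r * x * (y k)⁻¹ * q ^ i ≠ 0) :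
    (fun F : ℂ → ℂ =>
        t ^ n * F (q * x) * ∏ k : Fin n, eBC (s * x) (y k) =
          F x * ∏ k : Fin n, eBC (r * x) (y k))
      (fun x => ∏ k : Fin n,
        (qpochInf (s * x * y k) q * qpochInf (s * x * (y k)⁻¹) q) /
          (qpochInf (r * x * y k) q * qpochInf (r * x * (y k)⁻¹) q)) := by
  simp only
  have htn : (t : ℂ) ^ n = ∏ _k : Fin n, t := by simp
  rw [htn, ← Finset.prod_mul_distrib, ← Finset.prod_mul_distrib, ← Finset.prod_mul_distrib]
  refine Finset.prod_congr rfl fun k _ => ?_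
  have hyk := hy k
  -- rewrite shifted arguments
  have e1 : s * (q * x) * y k = s * x * y k * q := by ring
  have e2 : s * (q * x) * (y k)⁻¹ = s * x * (y k)⁻¹ * q := by ring
  have e3 : r * (q * x) * y k = r * x * y k * q := by ring
  have e4 : r * (q * x) * (y k)⁻¹ = r * x * (y k)⁻¹ * q := by ring
  rw [e1, e2, e3, e4,
    qpoch_shift (s * x * y k) q hqlt, qpoch_shift (s * x * (y k)⁻¹) q hqlt,
    qpoch_shift (r * x * y k) q hqlt, qpoch_shift (r * x * (y k)⁻¹) q hqlt,
    eBC_factor (s * x) (y k) (mul_ne_zero hs hx) hyk,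
    eBC_factor (r * x) (y k) (mul_ne_zero hr hx) hyk]
  have hv1 : 1 - r * x * y k ≠ 0 := by simpa using (hden k 0).1
  have hv2 : 1 - r * x * (y k)⁻¹ ≠ 0 := by simpa using (hden k 0).2
  have hsx : 1 - s * x * y k = 1 - s * x * y k := rfl
  have harg1 : (1 - s * x * y k) * (1 - s * x * (y k)⁻¹) / (s * x)
      = (1 - s * x * y k) * (1 - s * x * (y k)⁻¹) / (t * r * x) := by
    rw [hst]
  rw [harg1]
  exact aux_alg t r x (qpochInf (s * x * y k * q) q) (qpochInf (s * x * (y k)⁻¹ * q) q)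
    (qpochInf (r * x * y k * q) q) (qpochInf (r * x * (y k)⁻¹ * q) q)
    (1 - s * x * y k) (1 - s * x * (y k)⁻¹) (1 - r * x * y k) (1 - r * x * (y k)⁻¹)
    ht hr hx hv1 hv2
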